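/- Let A be a unital complex *-algebra with a sum-of-squares cone, and suppose every positive element of A is a sum of hermitian squares (the SOS property). If the set of positive elements of a countable computably-presented sub-ring A_Q is coRE-hard, then coRE ⊆ RE, a contradiction; hence if positivity in A is coRE-hard for elements of A_Q, then A does not have the SOS property, i.e., there exists a positive element of A_Q which is not a sum of hermitian squares in A. -/

import Mathlib

/-- An element is a sum of hermitian squares `Σ bᵢ* bᵢ`. -/
def IsSOS {A : Type*} [Ring A] [StarRing A] (a : A) : Prop :=
  a ∈ AddSubmonoid.closure {x : A | ∃ b : A, x = star b * b}

/-- An element of a complex `*`-algebra is positive if its image under every `*`-representation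
on a complex Hilbert space is a positive operator. -/
def IsPositiveElt {B : Type} [Ring B] [Algebra ℂ B] [StarRing B] (a : B) : Prop :=
  ∀ (H : Type) [NormedAddCommGroup H] [InnerProductSpace ℂ H] [CompleteSpace H]
    (π : B →⋆ₐ[ℂ] (H →L[ℂ] H)), (π a).IsPositive

/-- let `A` be a unital complex `*`-algebra and let `AQ : ℕ → A` enumerate a
countable computably-presented subring `A_Q` (elements encoded by natural numbers).  Suppose
sum-of-squares certificates are semidecidable (`REPred fun n => IsSOS (AQ n)`), and that
positivity of elements of `A_Q` is coRE-hard, i.e. the complement of any r.e. set many-one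
reduces to `{n | AQ n is positive}`.  Then (since otherwise coRE ⊆ RE, a contradiction) `A`
does not have the SOS property: some positive element of `A_Q` is not a sum of hermitian
squares in `A`. -/
lemma isSOS_isPositiveElt {A : Type} [Ring A] [Algebra ℂ A] [StarRing A] {a : A}
    (h : IsSOS a) : IsPositiveElt a := by
  intro H _ _ _ π
  induction h using AddSubmonoid.closure_induction with
  | mem x hx =>
    obtain ⟨b, rfl⟩ := hx
    rw [map_mul, map_star]
    have := (ContinuousLinearMap.isPositive_one (E := H) (𝕜 := ℂ)).adjoint_conj (π b)
    simpa [ContinuousLinearMap.star_eq_adjoint, ContinuousLinearMap.mul_def, ContinuousLinearMap.one_def, ContinuousLinearMap.comp_id] using this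
  | zero => simpa using ContinuousLinearMap.isPositive_zero (E := H) (𝕜 := ℂ)
  | add x y _ _ hx hy => simpa [map_add] using hx.add hy

lemma RePred.comp {p : ℕ → Prop} {f : ℕ → ℕ} (hp : REPred p) (hf : Computable f) :
    REPred fun n => p (f n) :=
  Partrec.comp hp hf

theorem coRE_hard_positivity_implies_not_SOS {A : Type} [Ring A] [Algebra ℂ A] [StarRing A]
    (AQ : ℕ → A)
    (hSOSre : REPred fun n => IsSOS (AQ n))
    (hard : ∀ p : ℕ → Prop, REPred p →
      ∃ f : ℕ → ℕ, Computable f ∧ ∀ n, (¬ p n ↔ IsPositiveElt (AQ (f n)))) :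
    ∃ n : ℕ, IsPositiveElt (AQ n) ∧ ¬ IsSOS (AQ n) := by
  by_contra hno
  push_neg at hno
  obtain ⟨f, hf, hiff⟩ := hard
    (fun n => (Nat.Partrec.Code.eval (Denumerable.ofNat Nat.Partrec.Code n) 0).Dom)
    (Partrec.comp (ComputablePred.halting_problem_re 0) (Computable.ofNat _))
  apply ComputablePred.halting_problem_not_re 0
  have h1 : REPred fun n => ¬ (Nat.Partrec.Code.eval (Denumerable.ofNat Nat.Partrec.Code n) 0).Dom := by
    apply (RePred.comp hSOSre hf).of_eq
    intro c
    constructor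
    · intro h
      exact (hiff c).2 (isSOS_isPositiveElt h)
    · intro h
      exact hno _ ((hiff c).1 h)
  have h2 : REPred fun c : Nat.Partrec.Code => ¬ (Nat.Partrec.Code.eval c 0).Dom := by
    apply (Partrec.comp h1 Computable.encode).of_eq
    intro c
    have hc : (Denumerable.ofNat Nat.Partrec.Code (Encodable.encode c)) = c :=
      Denumerable.ofNat_encode c
    beta_reduce
    rw [hc]
  exact h2
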